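/- Let M be a weight sequence with m_p = M_{p+1}/M_p and counting function m(x) = #{p ≥ 1 : m_p ≤ x}. Then condition (Ω-bar-bar) for the weight system V_M, namely: for all H > 0 there exists K < H such that for all L ≤ K, ∫_{Lt}^{Kt} m(x)/x dx = o(∫_{Lt}^{Ht} m(x)/x dx) as t → ∞, is equivalent to: there exists C > 1 such that m(x) = o(m(Cx)) as x → ∞. -/

import Mathlib

open Real Set Filter

/-- A weight sequence: positive, log-convex, with `M_p^{1/p} → ∞`. -/
def IsWeightSeq (M : ℕ → ℝ) : Prop :=
  (∀ p, 0 < M p) ∧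
  (∀ p : ℕ, 1 ≤ p → (M p) ^ 2 ≤ M (p - 1) * M (p + 1)) ∧
  Filter.Tendsto (fun p : ℕ => (M p) ^ ((1 : ℝ) / p)) Filter.atTop Filter.atTop

/-- The associated function `ω_M(t) = sup_p log (t^p M₀ / M_p)`. -/
noncomputable def assocFun (M : ℕ → ℝ) (t : ℝ) : ℝ :=
  ⨆ p : ℕ, Real.log (t ^ p * M 0 / M p)

/-- The quotient sequence `m_p = M_{p+1}/M_p`. -/
noncomputable def mseq (M : ℕ → ℝ) (p : ℕ) : ℝ := M (p + 1) / M p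

/-- The counting function `m(x) = #{p ≥ 1 : m_p ≤ x}` of the sequence `(m_p)`. -/
noncomputable def cntFun (M : ℕ → ℝ) (x : ℝ) : ℝ :=
  (Nat.card {p : ℕ // 1 ≤ p ∧ mseq M p ≤ x} : ℝ)

section Helpers

variable {M : ℕ → ℝ}

lemma mseq_mono (hpos : ∀ p, 0 < M p)
    (hlc : ∀ p : ℕ, 1 ≤ p → (M p) ^ 2 ≤ M (p - 1) * M (p + 1)) :
    Monotone (mseq M) := by
  apply monotone_nat_of_le_succ
  intro p
  have h := hlc (p + 1) (by omega)
  simp only [Nat.add_sub_cancel] at h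
  unfold mseq
  rw [div_le_div_iff₀ (hpos p) (hpos (p + 1))]
  nlinarith [hpos p, hpos (p + 1), hpos (p + 2)]

lemma mseq_tendsto (hM : IsWeightSeq M) : Tendsto (mseq M) atTop atTop := by
  obtain ⟨hpos, hlc, htend⟩ := hM
  apply tendsto_atTop_atTop_of_monotone (mseq_mono hpos hlc)
  intro b
  by_contra hb
  push_neg at hb
  set B : ℝ := max b 1 with hB
  have hB1 : (1:ℝ) ≤ B := le_max_right _ _
  have hBpos : (0:ℝ) < B := lt_of_lt_of_le one_pos hB1
  have hmB : ∀ p, mseq M p ≤ B := fun p => le_trans (hb p).le (le_max_left _ _)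
  have hMB : ∀ p, M p ≤ M 0 * B ^ p := by
    intro p
    induction p with
    | zero => simp
    | succ n ih =>
      have hstep : M (n + 1) = mseq M n * M n := by
        unfold mseq; rw [div_mul_cancel₀ _ (hpos n).ne']
      rw [hstep, pow_succ]
      calc mseq M n * M n ≤ B * (M 0 * B ^ n) :=
            mul_le_mul (hmB n) ih (hpos n).le hBpos.le
        _ = M 0 * (B ^ n * B) := by ring
  set A : ℝ := max (M 0) 1 with hA
  have hA1 : (1:ℝ) ≤ A := le_max_right _ _
  have hApos : (0:ℝ) < A := lt_of_lt_of_le one_pos hA1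
  have key : ∀ p : ℕ, 1 ≤ p → (M p) ^ ((1:ℝ)/p) ≤ A * B := by
    intro p hp
    have hp0 : (0:ℝ) < p := by exact_mod_cast hp
    have hMpA : M p ≤ A * B ^ p := by
      calc M p ≤ M 0 * B ^ p := hMB p
        _ ≤ A * B ^ p := by
            apply mul_le_mul_of_nonneg_right (le_max_left _ _) (by positivity)
    have h1 : (M p) ^ ((1:ℝ)/p) ≤ (A * B ^ p) ^ ((1:ℝ)/p) :=
      Real.rpow_le_rpow (hpos p).le hMpA (by positivity)
    have h2 : (A * B ^ p) ^ ((1:ℝ)/p) = A ^ ((1:ℝ)/p) * (B ^ p) ^ ((1:ℝ)/p) :=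
      Real.mul_rpow hApos.le (by positivity)
    have h3 : (B ^ p : ℝ) ^ ((1:ℝ)/p) = B := by
      rw [← Real.rpow_natCast B p, ← Real.rpow_mul hBpos.le]
      rw [mul_one_div, div_self hp0.ne', Real.rpow_one]
    have h4 : A ^ ((1:ℝ)/p) ≤ A := by
      calc A ^ ((1:ℝ)/p) ≤ A ^ (1:ℝ) := by
            apply Real.rpow_le_rpow_of_exponent_le hA1
            rw [div_le_one hp0]; exact_mod_cast hp
        _ = A := Real.rpow_one A
    calc (M p) ^ ((1:ℝ)/p) ≤ A ^ ((1:ℝ)/p) * B := by rw [h2] at h1; rw [h3] at h1; exact h1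
      _ ≤ A * B := mul_le_mul_of_nonneg_right h4 hBpos.le
  obtain ⟨N, hN⟩ := (htend.eventually (eventually_gt_atTop (A * B))).exists_forall_of_atTop
  have := hN (max N 1) (le_max_left _ _)
  exact absurd (key (max N 1) (le_max_right _ _)) (not_le.mpr this)

lemma cntSet_finite (hM : IsWeightSeq M) (x : ℝ) :
    {p : ℕ | 1 ≤ p ∧ mseq M p ≤ x}.Finite := by
  obtain ⟨N, hN⟩ := (mseq_tendsto hM).eventually (eventually_gt_atTop x) |>.exists_forall_of_atTop
  apply Set.Finite.subset (Set.finite_Iio N)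
  intro p hp
  simp only [Set.mem_Iio]
  by_contra h
  exact absurd hp.2 (not_le.mpr (hN p (by omega)))

lemma cntFun_eq (x : ℝ) : cntFun M x = ({p : ℕ | 1 ≤ p ∧ mseq M p ≤ x}).ncard := by
  unfold cntFun
  rw [← Nat.card_coe_set_eq]
  rfl

lemma cntFun_nonneg (x : ℝ) : 0 ≤ cntFun M x := Nat.cast_nonneg _

lemma cntFun_mono (hM : IsWeightSeq M) : Monotone (cntFun M) := by
  intro x y hxy
  rw [cntFun_eq, cntFun_eq]
  have hsub : {p : ℕ | 1 ≤ p ∧ mseq M p ≤ x} ⊆ {p : ℕ | 1 ≤ p ∧ mseq M p ≤ y} :=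
    fun p hp => ⟨hp.1, hp.2.trans hxy⟩
  exact_mod_cast Set.ncard_le_ncard hsub (cntSet_finite hM y)

lemma cnt_intervalIntegrable (hM : IsWeightSeq M) {a b : ℝ} (ha : 0 < a) (hab : a ≤ b) :
    IntervalIntegrable (fun x => cntFun M x / x) MeasureTheory.volume a b := by
  have h1 : IntervalIntegrable (cntFun M) MeasureTheory.volume a b :=
    (cntFun_mono hM).intervalIntegrable
  have hcont : ContinuousOn (fun x : ℝ => x⁻¹) (Set.uIcc a b) := by
    apply continuousOn_inv₀.mono
    intro x hx
    rw [Set.uIcc_of_le hab] at hx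
    simp only [Set.mem_compl_iff, Set.mem_singleton_iff]
    exact (lt_of_lt_of_le ha hx.1).ne'
  simpa only [div_eq_mul_inv] using h1.mul_continuousOn hcont

lemma inv_intervalIntegrable {a b : ℝ} (ha : 0 < a) (hab : a ≤ b) :
    IntervalIntegrable (fun x : ℝ => x⁻¹) MeasureTheory.volume a b := by
  apply intervalIntegral.intervalIntegrable_inv
  · intro x hx
    rw [Set.uIcc_of_le hab] at hx
    exact (lt_of_lt_of_le ha hx.1).ne'
  · exact continuousOn_id

lemma integral_lower (hM : IsWeightSeq M) {a b : ℝ} (ha : 0 < a) (hab : a ≤ b) :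
    cntFun M a * Real.log (b / a) ≤ ∫ x in a..b, cntFun M x / x := by
  have hb : 0 < b := lt_of_lt_of_le ha hab
  have heq : cntFun M a * Real.log (b / a) = ∫ x in a..b, cntFun M a * x⁻¹ := by
    rw [intervalIntegral.integral_const_mul, integral_inv_of_pos ha hb]
  rw [heq]
  apply intervalIntegral.integral_mono_on hab
    ((inv_intervalIntegrable ha hab).const_mul _) (cnt_intervalIntegrable hM ha hab)
  intro x hx
  have hx0 : 0 < x := lt_of_lt_of_le ha hx.1
  rw [div_eq_mul_inv]
  exact mul_le_mul_of_nonneg_right (cntFun_mono hM hx.1) (by positivity)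

lemma integral_upper (hM : IsWeightSeq M) {a b : ℝ} (ha : 0 < a) (hab : a ≤ b) :
    (∫ x in a..b, cntFun M x / x) ≤ cntFun M b * Real.log (b / a) := by
  have hb : 0 < b := lt_of_lt_of_le ha hab
  have heq : cntFun M b * Real.log (b / a) = ∫ x in a..b, cntFun M b * x⁻¹ := by
    rw [intervalIntegral.integral_const_mul, integral_inv_of_pos ha hb]
  rw [heq]
  apply intervalIntegral.integral_mono_on hab (cnt_intervalIntegrable hM ha hab)
    ((inv_intervalIntegrable ha hab).const_mul _)
  intro x hx
  have hx0 : 0 < x := lt_of_lt_of_le ha hx.1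
  rw [div_eq_mul_inv]
  exact mul_le_mul_of_nonneg_right (cntFun_mono hM hx.2) (by positivity)

lemma integral_cnt_nonneg (hM : IsWeightSeq M) {a b : ℝ} (ha : 0 < a) (hab : a ≤ b) :
    0 ≤ ∫ x in a..b, cntFun M x / x := by
  apply intervalIntegral.integral_nonneg hab
  intro x hx
  have hx0 : 0 < x := lt_of_lt_of_le ha hx.1
  exact div_nonneg (cntFun_nonneg x) hx0.le

lemma integral_cnt_mono_upper (hM : IsWeightSeq M) {a b c : ℝ} (ha : 0 < a) (hab : a ≤ b)
    (hbc : b ≤ c) :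
    (∫ x in a..b, cntFun M x / x) ≤ ∫ x in a..c, cntFun M x / x := by
  have hb : 0 < b := lt_of_lt_of_le ha hab
  rw [← intervalIntegral.integral_add_adjacent_intervals
    (cnt_intervalIntegrable hM ha hab) (cnt_intervalIntegrable hM hb hbc)]
  have := integral_cnt_nonneg hM hb hbc
  linarith

lemma integral_cnt_mono_lower (hM : IsWeightSeq M) {a b c : ℝ} (ha : 0 < a) (hab : a ≤ b)
    (hbc : b ≤ c) :
    (∫ x in b..c, cntFun M x / x) ≤ ∫ x in a..c, cntFun M x / x := by
  have hb : 0 < b := lt_of_lt_of_le ha hab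
  rw [← intervalIntegral.integral_add_adjacent_intervals
    (cnt_intervalIntegrable hM ha hab) (cnt_intervalIntegrable hM hb hbc)]
  have := integral_cnt_nonneg hM ha hab
  linarith

end Helpers

/-- The integral form of condition (Ω-bar-bar) for `V_M` is equivalent to
`∃ C > 1` with `m(x) = o(m(Cx))` as `x → ∞`. -/
theorem omegabarbar_iff_counting_littleO (M : ℕ → ℝ) (hM : IsWeightSeq M) :
    (∀ H > (0:ℝ), ∃ K : ℝ, 0 < K ∧ K < H ∧ ∀ L : ℝ, 0 < L → L ≤ K →
      ∀ ε > (0:ℝ), ∃ T : ℝ, ∀ t ≥ T,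
        (∫ x in L * t..K * t, cntFun M x / x) ≤ ε * ∫ x in L * t..H * t, cntFun M x / x)
    ↔
    (∃ C > (1:ℝ), ∀ ε > (0:ℝ), ∃ X : ℝ, ∀ x ≥ X, cntFun M x ≤ ε * cntFun M (C * x)) := by
  constructor
  · -- (Ω-bar-bar) ⟹ little-o of counting function
    intro h
    obtain ⟨K, hK0, hK1, hK⟩ := h 1 one_pos
    refine ⟨1 / K ^ 2, ?_, ?_⟩
    · rw [gt_iff_lt, lt_div_iff₀ (by positivity), one_mul]
      nlinarith
    · intro ε hε
      have hlogK : 0 < Real.log (1 / K) := by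
        apply Real.log_pos
        rw [lt_div_iff₀ hK0, one_mul]; exact hK1
      obtain ⟨T, hT⟩ := hK (K ^ 2) (by positivity) (by nlinarith) (ε / 2) (by positivity)
      refine ⟨K ^ 2 * max T 1, ?_⟩
      intro x hx
      set t : ℝ := x / K ^ 2 with ht
      have htT : t ≥ max T 1 := by
        rw [ht, ge_iff_le, le_div_iff₀ (by positivity)]
        linarith [hx]
      have ht1 : (1:ℝ) ≤ t := le_trans (le_max_right _ _) htT
      have ht0 : 0 < t := lt_of_lt_of_le one_pos ht1
      have hxt : x = K ^ 2 * t := by rw [ht]; field_simp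
      have hmain := hT t (le_trans (le_max_left _ _) htT)
      -- lower bound for LHS integral
      have hKt : K ^ 2 * t ≤ K * t := by
        nlinarith [mul_nonneg (mul_nonneg hK0.le ht0.le) (sub_nonneg.mpr hK1.le)]
      have hlow : cntFun M (K ^ 2 * t) * Real.log (1 / K) ≤
          ∫ y in (K ^ 2 * t)..(K * t), cntFun M y / y := by
        have := integral_lower hM (a := K ^ 2 * t) (b := K * t) (by positivity) hKt
        have harg : K * t / (K ^ 2 * t) = 1 / K := by field_simp
        rwa [harg] at this
      -- upper bound for RHS integral
      have hK1t : K ^ 2 * t ≤ 1 * t := by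
        have h1 : K ^ 2 ≤ 1 := by nlinarith
        nlinarith [mul_nonneg (sub_nonneg.mpr h1) ht0.le]
      have hup : (∫ y in (K ^ 2 * t)..(1 * t), cntFun M y / y) ≤
          cntFun M (1 * t) * (2 * Real.log (1 / K)) := by
        have := integral_upper hM (a := K ^ 2 * t) (b := 1 * t) (by positivity) hK1t
        have harg : 1 * t / (K ^ 2 * t) = (1 / K) ^ 2 := by field_simp
        rw [harg] at this
        rw [Real.log_pow] at this
        calc (∫ y in (K ^ 2 * t)..(1 * t), cntFun M y / y)
            ≤ cntFun M (1 * t) * ((2:ℕ) * Real.log (1 / K)) := this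
          _ = cntFun M (1 * t) * (2 * Real.log (1 / K)) := by norm_num
      have hchain : cntFun M (K ^ 2 * t) * Real.log (1 / K) ≤
          ε / 2 * (cntFun M (1 * t) * (2 * Real.log (1 / K))) := by
        calc cntFun M (K ^ 2 * t) * Real.log (1 / K)
            ≤ ∫ y in (K ^ 2 * t)..(K * t), cntFun M y / y := hlow
          _ ≤ ε / 2 * ∫ y in (K ^ 2 * t)..(1 * t), cntFun M y / y := hmain
          _ ≤ ε / 2 * (cntFun M (1 * t) * (2 * Real.log (1 / K))) := by
              apply mul_le_mul_of_nonneg_left hup (by positivity)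
      have hfin : cntFun M (K ^ 2 * t) ≤ ε * cntFun M t := by
        have h2 : cntFun M (K ^ 2 * t) * Real.log (1 / K) ≤
            (ε * cntFun M (1 * t)) * Real.log (1 / K) := by nlinarith [hchain]
        have h3 := le_of_mul_le_mul_right h2 hlogK
        rwa [one_mul] at h3
      rw [hxt]
      calc cntFun M (K ^ 2 * t) ≤ ε * cntFun M t := hfin
        _ = ε * cntFun M (1 / K ^ 2 * (K ^ 2 * t)) := by
            congr 2
            field_simp
  · -- little-o of counting function ⟹ (Ω-bar-bar)
    intro h H hH
    obtain ⟨C, hC1, hC⟩ := h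
    have hC0 : (0:ℝ) < C := lt_trans one_pos hC1
    have hlogC : 0 < Real.log C := Real.log_pos hC1
    refine ⟨H / C ^ 2, by positivity, ?_, ?_⟩
    · rw [div_lt_iff₀ (by positivity)]
      nlinarith [mul_pos (mul_pos hH (sub_pos.mpr hC1)) (by linarith : (0:ℝ) < C + 1)]
    · intro L hL0 hLK ε hε
      set K : ℝ := H / C ^ 2 with hKdef
      have hK0 : 0 < K := by positivity
      set D : ℝ := Real.log (K / L) with hD
      have hD0 : 0 ≤ D := by
        apply Real.log_nonneg
        rw [le_div_iff₀ hL0, one_mul]; exact hLK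
      set ε' : ℝ := ε * Real.log C / (D + 1) with hε'
      have hε'0 : 0 < ε' := by positivity
      obtain ⟨X, hX⟩ := hC ε' hε'0
      refine ⟨max (X / K) 1, ?_⟩
      intro t ht
      have ht1 : (1:ℝ) ≤ t := le_trans (le_max_right _ _) ht
      have ht0 : 0 < t := lt_of_lt_of_le one_pos ht1
      have hKtX : K * t ≥ X := by
        have : X / K ≤ t := le_trans (le_max_left _ _) ht
        rw [ge_iff_le, ← div_le_iff₀' hK0]
        exact this
      have hsmall := hX (K * t) hKtX
      -- orderings
      have hLK' : L * t ≤ K * t := by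
        nlinarith [mul_nonneg (sub_nonneg.mpr hLK) ht0.le]
      have hKCK : K * t ≤ C * (K * t) := by
        nlinarith [mul_nonneg (mul_nonneg hK0.le ht0.le) (sub_nonneg.mpr hC1.le)]
      have hCKH : C * (K * t) ≤ H * t := by
        have : C * K ≤ H := by
          rw [hKdef]
          rw [mul_div_assoc']
          rw [div_le_iff₀ (by positivity)]
          nlinarith [mul_pos hH (sub_pos.mpr hC1), hC0]
        nlinarith
      -- upper bound of LHS
      have hup : (∫ x in L * t..K * t, cntFun M x / x) ≤ cntFun M (K * t) * D := by
        have := integral_upper hM (a := L * t) (b := K * t) (by positivity) hLK'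
        have harg : K * t / (L * t) = K / L := by field_simp
        rwa [harg] at this
      -- lower bound of RHS
      have hlow : cntFun M (C * (K * t)) * Real.log C ≤
          ∫ x in (C * (K * t))..( H * t), cntFun M x / x := by
        have := integral_lower hM (a := C * (K * t)) (b := H * t) (by positivity) hCKH
        have harg : H * t / (C * (K * t)) = C := by
          rw [hKdef]; field_simp
        rwa [harg] at this
      have hrhs : cntFun M (C * (K * t)) * Real.log C ≤
          ∫ x in L * t..H * t, cntFun M x / x := by
        apply le_trans hlow
        exact integral_cnt_mono_lower hM (by positivity)
          (le_trans hLK' hKCK) hCKH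
      have hεbound : ε' * D ≤ ε * Real.log C := by
        rw [hε']
        rw [div_mul_eq_mul_div, div_le_iff₀ (by positivity)]
        nlinarith [hD0, hlogC, hε.le]
      calc (∫ x in L * t..K * t, cntFun M x / x)
          ≤ cntFun M (K * t) * D := hup
        _ ≤ ε' * cntFun M (C * (K * t)) * D :=
            mul_le_mul_of_nonneg_right hsmall hD0
        _ = ε' * D * cntFun M (C * (K * t)) := by ring
        _ ≤ ε * Real.log C * cntFun M (C * (K * t)) :=
            mul_le_mul_of_nonneg_right hεbound (cntFun_nonneg _)
        _ = ε * (cntFun M (C * (K * t)) * Real.log C) := by ring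
        _ ≤ ε * ∫ x in L * t..H * t, cntFun M x / x :=
            mul_le_mul_of_nonneg_left hrhs hε.le
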